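/- For a binomial distribution B(n,p) where np = m is an integer, the expected absolute deviation E|X - m| equals 2np(1-p) * C(n-1, m-1) * p^{m-1} * (1-p)^{n-m}. -/

import Mathlib

/-- De Moivre's mean absolute deviation formula: for X ~ B(n,p) with
np = m a positive integer, E|X - m| = 2np(1-p) C(n-1, m-1) p^(m-1) (1-p)^(n-m). -/
theorem binomial_mean_deviation (n m : ℕ) (p : ℝ) (hp0 : 0 < p) (hp1 : p < 1)
    (hm : (n : ℝ) * p = (m : ℝ)) (hm1 : 1 ≤ m) (hmn : m ≤ n) :
    ∑ k ∈ Finset.range (n + 1),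
      (n.choose k : ℝ) * p^k * (1-p)^(n-k) * |(k : ℝ) - (m : ℝ)|
    = 2 * (n : ℝ) * p * (1 - p) * ((n-1).choose (m-1) : ℝ) * p^(m-1) * (1-p)^(n-m) := by
    -- m < n, else p = 1
  have hmn' : m < n := by
    rcases lt_or_eq_of_le hmn with h | h
    · exact h
    · exfalso
      subst h
      have hn0 : (m:ℝ) ≠ 0 := by
        have : (1:ℝ) ≤ (m:ℝ) := by exact_mod_cast hm1
        linarith
      have : p = 1 := by
        have := hm
        field_simp at this
        tauto
      linarith
  set G : ℕ → ℝ := fun k => (1-p) * k * (n.choose k : ℝ) * p^k * (1-p)^(n-k) with hG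
  have key : ∀ k, (n.choose k : ℝ) * p^k * (1-p)^(n-k) * ((m:ℝ) - k)
      = G (k+1) - G k := by
    intro k
    rcases lt_trichotomy k n with hk | hk | hk
    · have hC : (n.choose (k+1) : ℝ) = (n.choose k : ℝ) * ((n:ℝ) - k) / ((k:ℝ)+1) := by
        have h := Nat.choose_succ_right_eq n k
        have h' : ((n.choose (k+1) * (k+1) : ℕ) : ℝ) = ((n.choose k * (n-k) : ℕ) : ℝ) := by
          exact_mod_cast congrArg (Nat.cast : ℕ → ℝ) h
        push_cast [Nat.cast_sub hk.le] at h'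
        field_simp
        linarith [h']
      have hpow : (1-p)^(n-k) = (1-p)^(n-(k+1)) * (1-p) := by
        rw [← pow_succ]; congr 1; omega
      simp only [hG]
      rw [hC, hpow, ← hm]
      push_cast
      have hk1 : (k:ℝ) + 1 ≠ 0 := by positivity
      field_simp
      ring
    · subst hk
      simp only [hG, Nat.choose_succ_self, Nat.choose_self, Nat.sub_self]
      rw [← hm]
      push_cast
      ring
    · have h1 : n.choose k = 0 := Nat.choose_eq_zero_of_lt hk
      have h2 : n.choose (k+1) = 0 := Nat.choose_eq_zero_of_lt (by omega)
      simp [hG, h1, h2]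
  have tel : ∀ N, ∑ k ∈ Finset.range N,
      (n.choose k : ℝ) * p^k * (1-p)^(n-k) * ((m:ℝ) - k) = G N := by
    intro N
    rw [Finset.sum_congr rfl (fun k _ => key k), Finset.sum_range_sub]
    simp [hG]
  have sum_zero : ∑ k ∈ Finset.range (n+1),
      (n.choose k : ℝ) * p^k * (1-p)^(n-k) * ((m:ℝ) - k) = 0 := by
    rw [tel]
    simp [hG, Nat.choose_succ_self]
  have sum_low : ∑ k ∈ Finset.range (m+1),
      (n.choose k : ℝ) * p^k * (1-p)^(n-k) * ((m:ℝ) - k) = G (m+1) := tel (m+1)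
  -- decompose |k - m|
  have habs : ∀ k ∈ Finset.range (n+1),
      (n.choose k : ℝ) * p^k * (1-p)^(n-k) * |(k : ℝ) - (m : ℝ)|
      = -((n.choose k : ℝ) * p^k * (1-p)^(n-k) * ((m:ℝ) - k))
        + 2 * ((n.choose k : ℝ) * p^k * (1-p)^(n-k) * max ((m:ℝ) - k) 0) := by
    intro k _
    rcases le_or_gt (m:ℝ) (k:ℝ) with h | h
    · rw [abs_of_nonneg (by linarith), max_eq_right (by linarith)]; ring
    · rw [abs_of_neg (by linarith), max_eq_left (by linarith)]; ring
  rw [Finset.sum_congr rfl habs, Finset.sum_add_distrib, Finset.sum_neg_distrib,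
    sum_zero, neg_zero, zero_add, ← Finset.mul_sum]
  have hsub : ∑ k ∈ Finset.range (n+1),
      (n.choose k : ℝ) * p^k * (1-p)^(n-k) * max ((m:ℝ) - k) 0
      = ∑ k ∈ Finset.range (m+1),
      (n.choose k : ℝ) * p^k * (1-p)^(n-k) * ((m:ℝ) - k) := by
    have step1 : ∑ k ∈ Finset.range (n+1),
        (n.choose k : ℝ) * p^k * (1-p)^(n-k) * max ((m:ℝ) - k) 0
        = ∑ k ∈ Finset.range (m+1),
        (n.choose k : ℝ) * p^k * (1-p)^(n-k) * max ((m:ℝ) - k) 0 := by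
      refine (Finset.sum_subset (Finset.range_subset_range.mpr (by omega)) ?_).symm
      intro k hk hk'
      have h2 : m + 1 ≤ k := by
        by_contra hcon
        exact hk' (Finset.mem_range.mpr (by omega))
      have h3 : (m:ℝ) + 1 ≤ (k:ℝ) := by exact_mod_cast h2
      rw [max_eq_right (by linarith), mul_zero]
    rw [step1]
    refine Finset.sum_congr rfl fun k hk => ?_
    have hk2 : k ≤ m := by have := Finset.mem_range.mp hk; omega
    have : (k:ℝ) ≤ (m:ℝ) := Nat.cast_le.mpr hk2
    rw [max_eq_left (by linarith)]
  rw [hsub, sum_low]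
  -- final algebra: 2 * G (m+1) = RHS
  have hC1 : ((m:ℝ)+1) * (n.choose (m+1) : ℝ) = (n.choose m : ℝ) * ((n:ℝ) - m) := by
    have h := Nat.choose_succ_right_eq n m
    have h' : ((n.choose (m+1) * (m+1) : ℕ) : ℝ) = ((n.choose m * (n-m) : ℕ) : ℝ) := by
      exact_mod_cast congrArg (Nat.cast : ℕ → ℝ) h
    push_cast [Nat.cast_sub hmn] at h'
    linarith
  have hC2 : (n:ℝ) * ((n-1).choose (m-1) : ℝ) = (n.choose m : ℝ) * (m:ℝ) := by
    have h := Nat.add_one_mul_choose_eq (n-1) (m-1)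
    have h2 : (n-1)+1 = n := by omega
    have h3 : (m-1)+1 = m := by omega
    rw [h2, h3] at h
    exact_mod_cast congrArg (Nat.cast : ℕ → ℝ) h
  have hpow1 : (1-p)^(n-m) = (1-p)^(n-(m+1)) * (1-p) := by
    rw [← pow_succ]; congr 1; omega
  have hpow2 : p^(m+1) = p^(m-1) * p^2 := by
    rw [← pow_add]; congr 1; omega
  simp only [hG]
  rw [hpow1, hpow2]
  push_cast
  linear_combination (2*(1-p)*p^(m-1)*p^2*(1-p)^(n-(m+1))) * hC1
    - (2*(1-p)*p*(1-p)^(n-(m+1))*p^(m-1)) * hC2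
    + (2*(1-p)*(n.choose m : ℝ)*p^(m-1)*p*(1-p)^(n-(m+1))) * hm
    + (2*p^(m-1)*(1-p)^(n-(m+1))*p^2*(1-p)) * hC2
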